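/- Let F be an adequate family of finite subsets of ℕ and define F̄ = { {n} ∪ E : E ∈ F, n < min E } ∪ F. If A ∈ F[L]^{(β)} is nonempty, l ∈ L, and l < min A, then {l} ∪ A ∈ F̄[L]^{(β)}, for every ordinal β. Consequently, if F[L]^{(ω^α)} ≠ ∅ then s(F̄[L]) > ω^α + 1. -/

import Mathlib

open Ordinal Set

/-- 1-indexed increasing enumeration of an (infinite) subset of ℕ. -/
noncomputable def enum1 (M : Set ℕ) (i : ℕ) : ℕ := Nat.nth (· ∈ M) (i - 1)

/-- A collection of finite subsets of ℕ is hereditary if closed under subsets. -/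
def Hereditary (𝓕 : Set (Finset ℕ)) : Prop :=
  ∀ ⦃E F : Finset ℕ⦄, E ⊆ F → F ∈ 𝓕 → E ∈ 𝓕

/-- A collection is spreading if closed under spreadings. -/
def Spreading (𝓕 : Set (Finset ℕ)) : Prop :=
  ∀ F ∈ 𝓕, ∀ (G : Finset ℕ) (h : G.card = F.card),
    (∀ i : Fin F.card, ((F.orderIsoOfFin rfl i : ℕ)) ≤ ((G.orderIsoOfFin h i : ℕ))) → G ∈ 𝓕

/-- `𝓕[N]`: members of `𝓕` that are subsets of `N`. -/
def restrict (𝓕 : Set (Finset ℕ)) (N : Set ℕ) : Set (Finset ℕ) :=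
  {E ∈ 𝓕 | (E : Set ℕ) ⊆ N}

/-- `𝓕(M)`: push the collection `𝓕` onto the infinite set `M` via its increasing
(1-indexed) enumeration. -/
noncomputable def push (𝓕 : Set (Finset ℕ)) (M : Set ℕ) : Set (Finset ℕ) :=
  {F | ∃ E ∈ 𝓕, F = E.image (enum1 M)}

/-- Characteristic function of a finite set, as a point of the Cantor space. -/
def chi (F : Finset ℕ) : ℕ → Bool := fun n => decide (n ∈ F)

/-- Pointwise closedness of a family of finite subsets of ℕ, viewed in `2^ℕ`. -/
def PtwiseClosed (𝓕 : Set (Finset ℕ)) : Prop := IsClosed (chi '' 𝓕)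

/-- An adequate family is hereditary and pointwise closed. -/
def Adequate (𝓕 : Set (Finset ℕ)) : Prop := Hereditary 𝓕 ∧ PtwiseClosed 𝓕

/-- The first Schreier class `S₁ = {F : |F| ≤ min F}` (with `∅ ∈ S₁`). -/
def Schreier1 : Set (Finset ℕ) := {F | ∀ n ∈ F, F.card ≤ n}

/-- A system of Schreier classes `S α` for all ordinals, together with the fixed
cofinal sequences used at limit stages. -/
structure SchreierSystem where
  S : Ordinal → Set (Finset ℕ)
  seq : Ordinal → ℕ → Ordinal
  seq_lt : ∀ {α : Ordinal}, Order.IsSuccLimit α → ∀ n, seq α n < α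
  seq_mono : ∀ {α : Ordinal}, Order.IsSuccLimit α → StrictMono (seq α)
  seq_sup : ∀ {α : Ordinal}, Order.IsSuccLimit α → (⨆ n, seq α n) = α
  zero_def : S 0 = {F | ∃ n : ℕ, 1 ≤ n ∧ F = {n}} ∪ {∅}
  one_def : S 1 = Schreier1
  succ_def : ∀ α : Ordinal, S (α + 1) =
    {F | ∃ (k : ℕ) (Fs : Fin (k + 1) → Finset ℕ),
      F = Finset.univ.biUnion Fs ∧ (∀ i, Fs i ∈ S α) ∧
      (∀ i j : Fin (k + 1), i < j → ∀ x ∈ Fs i, ∀ y ∈ Fs j, x < y) ∧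
      (∀ x ∈ Fs 0, k + 1 ≤ x)}
  limit_def : ∀ α : Ordinal, Order.IsSuccLimit α → S α =
    {F | ∃ n : ℕ, 1 ≤ n ∧ F ∈ S (seq α n) ∧ ∀ m ∈ F, n ≤ m}

/-- Transfinitely iterated strong Cantor–Bendixson derivative of `G[L]`. -/
noncomputable def sDeriv (G : Set (Finset ℕ)) (L : Set ℕ) : Ordinal → Set (Finset ℕ) :=
  fun β => Ordinal.limitRecOn β (restrict G L)
    (fun _ D => {A ∈ D | {l ∈ L | insert l A ∉ D}.Finite})
    (fun o _ ih => ⋂ (b : Set.Iio o), ih b b.2)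

/-- Strong Cantor–Bendixson index of `G[L]`. -/
noncomputable def sIndex (G : Set (Finset ℕ)) (L : Set ℕ) : Ordinal :=
  sInf {β | sDeriv G L β = ∅}

section AuxSCB

variable (G : Set (Finset ℕ)) (L : Set ℕ)

lemma sDeriv_zero : sDeriv G L 0 = restrict G L := Ordinal.limitRecOn_zero _ _ _

lemma sDeriv_succ (β : Ordinal) : sDeriv G L (Order.succ β) =
    {A ∈ sDeriv G L β | {l ∈ L | insert l A ∉ sDeriv G L β}.Finite} :=
  Ordinal.limitRecOn_succ _ _ _ _

lemma sDeriv_add_one (β : Ordinal) : sDeriv G L (β + 1) =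
    {A ∈ sDeriv G L β | {l ∈ L | insert l A ∉ sDeriv G L β}.Finite} := by
  rw [Ordinal.add_one_eq_succ, sDeriv_succ]

lemma sDeriv_limit {β : Ordinal} (h : Order.IsSuccLimit β) :
    sDeriv G L β = ⋂ (b : Set.Iio β), sDeriv G L b :=
  Ordinal.limitRecOn_limit _ _ _ _ h

lemma sDeriv_anti : ∀ {β γ : Ordinal}, γ ≤ β → sDeriv G L β ⊆ sDeriv G L γ := by
  intro β
  induction β using Ordinal.limitRecOn with
  | zero =>
    intro γ h
    rw [nonpos_iff_eq_zero.mp h]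
  | add_one β ih =>
    rw [← Order.succ_eq_add_one]
    intro γ h
    rcases Order.le_succ_iff_eq_or_le.mp h with rfl | h'
    · exact subset_rfl
    · intro x hx
      rw [sDeriv_succ] at hx
      exact ih h' hx.1
  | limit β hβ ih =>
    intro γ h
    rcases eq_or_lt_of_le h with rfl | h'
    · exact subset_rfl
    · rw [sDeriv_limit _ _ hβ]
      exact Set.iInter_subset _ (⟨γ, h'⟩ : Set.Iio β)

lemma sDeriv_hered (hG : Hereditary G) :
    ∀ β : Ordinal, ∀ {A B : Finset ℕ}, A ⊆ B → B ∈ sDeriv G L β → A ∈ sDeriv G L β := by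
  intro β
  induction β using Ordinal.limitRecOn with
  | zero =>
    intro A B h hB
    rw [sDeriv_zero] at hB ⊢
    exact ⟨hG h hB.1, (Set.Subset.trans (Finset.coe_subset.mpr h) hB.2)⟩
  | add_one β ih =>
    rw [← Order.succ_eq_add_one]
    intro A B h hB
    rw [sDeriv_succ] at hB ⊢
    refine ⟨ih h hB.1, hB.2.subset ?_⟩
    rintro k ⟨hk1, hk2⟩
    exact ⟨hk1, fun hmem => hk2 (ih (Finset.insert_subset_insert _ h) hmem)⟩
  | limit β hβ ih =>
    intro A B h hB
    rw [sDeriv_limit _ _ hβ, Set.mem_iInter] at hB ⊢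
    exact fun b => ih b b.2 h (hB b)

lemma insert_mem_sDeriv (𝓕 : Set (Finset ℕ))
    (hins : ∀ A ∈ 𝓕, ∀ l : ℕ, (∀ m ∈ A, l < m) → insert l A ∈ G) :
    ∀ β : Ordinal, ∀ A ∈ sDeriv 𝓕 L β, ∀ l ∈ L, (∀ m ∈ A, l < m) →
      insert l A ∈ sDeriv G L β := by
  intro β
  induction β using Ordinal.limitRecOn with
  | zero =>
    intro A hA l hl hlt
    rw [sDeriv_zero] at hA ⊢
    refine ⟨hins A hA.1 l hlt, ?_⟩
    rw [Finset.coe_insert]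
    exact Set.insert_subset hl hA.2
  | add_one β ih =>
    rw [← Order.succ_eq_add_one]
    intro A hA l hl hlt
    rw [sDeriv_succ] at hA ⊢
    refine ⟨ih A hA.1 l hl hlt, ?_⟩
    refine (hA.2.union (Set.finite_Iic l)).subset ?_
    rintro k ⟨hk1, hk2⟩
    by_cases hkl : k ≤ l
    · exact Set.mem_union_right _ hkl
    · push_neg at hkl
      refine Set.mem_union_left _ ⟨hk1, fun hkA => hk2 ?_⟩
      have hstep : insert l (insert k A) ∈ sDeriv G L β := by
        refine ih (insert k A) hkA l hl ?_
        intro m hm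
        rcases Finset.mem_insert.mp hm with rfl | hm
        · exact hkl
        · exact hlt m hm
      rwa [Finset.insert_comm] at hstep
  | limit β hβ ih =>
    intro A hA l hl hlt
    rw [sDeriv_limit _ _ hβ, Set.mem_iInter] at hA ⊢
    exact fun b => ih b b.2 A (hA b) l hl hlt

end AuxSCB

/-- A pointwise-closed family admits no increasing chain with unbounded cardinalities. -/
lemma no_chain (𝓕 : Set (Finset ℕ)) (hcl : PtwiseClosed 𝓕)
    (g : ℕ → Finset ℕ) (hmem : ∀ n, g n ∈ 𝓕) (hsub : ∀ n, g n ⊆ g (n + 1))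
    (hcard : ∀ n, n ≤ (g n).card) : False := by
  classical
  have hmono : Monotone g := monotone_nat_of_le_succ hsub
  set x : ℕ → Bool := fun m => decide (∃ n, m ∈ g n) with hxdef
  have htend : Filter.Tendsto (fun n => chi (g n)) Filter.atTop (nhds x) := by
    rw [tendsto_pi_nhds]
    intro m
    by_cases hm : ∃ n, m ∈ g n
    · obtain ⟨n0, hn0⟩ := hm
      refine Filter.Tendsto.congr' ?_ (tendsto_const_nhds (x := x m))
      filter_upwards [Filter.eventually_ge_atTop n0] with n hn
      have h1 : m ∈ g n := hmono hn hn0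
      simp only [hxdef, chi]
      rw [decide_eq_true ⟨n0, hn0⟩, decide_eq_true h1]
    · refine Filter.Tendsto.congr' ?_ (tendsto_const_nhds (x := x m))
      filter_upwards with n
      push_neg at hm
      simp only [hxdef, chi]
      rw [decide_eq_false (by push_neg; exact hm), decide_eq_false (hm n)]
  have hx : x ∈ chi '' 𝓕 :=
    (hcl : IsClosed (chi '' 𝓕)).mem_of_tendsto htend
      (Filter.Eventually.of_forall fun n => ⟨g n, hmem n, rfl⟩)
  obtain ⟨F, hF, hFx⟩ := hx
  have hsubF : g (F.card + 1) ⊆ F := by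
    intro m hm
    have h1 : x m = true := decide_eq_true ⟨_, hm⟩
    rw [← hFx] at h1
    simpa [chi] using h1
  have h2 := Finset.card_le_card hsubF
  have h3 := hcard (F.card + 1)
  omega

/-- If the derivative has a fixed point, it is empty (uses pointwise closedness of 𝓕). -/
lemma deriv_fixed_empty (𝓕 : Set (Finset ℕ)) (hcl : PtwiseClosed 𝓕)
    {G : Set (Finset ℕ)} (L : Set ℕ) (hL : L.Infinite)
    (hGer : ∀ B ∈ G, ∀ b ∈ B, (∀ m ∈ B, b ≤ m) → B.erase b ∈ 𝓕)
    {β : Ordinal} (hfix : sDeriv G L (β + 1) = sDeriv G L β) :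
    sDeriv G L β = ∅ := by
  classical
  by_contra hne
  obtain ⟨A0, hA0⟩ := Set.nonempty_iff_ne_empty.mpr hne
  set D := sDeriv G L β with hD
  have key : ∀ A ∈ D, ∃ l, l ∈ L ∧ l ∉ A ∧ insert l A ∈ D := by
    intro A hA
    have hA' : A ∈ sDeriv G L (β + 1) := by rw [hfix]; exact hA
    rw [sDeriv_add_one] at hA'
    obtain ⟨-, hfin⟩ := hA'
    have hnonempty : (L \ ({l ∈ L | insert l A ∉ sDeriv G L β} ∪ (A : Set ℕ))).Nonempty :=
      (hL.diff (hfin.union A.finite_toSet)).nonempty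
    obtain ⟨l, hlL, hlNot⟩ := hnonempty
    rw [Set.mem_union, not_or] at hlNot
    refine ⟨l, hlL, by simpa using hlNot.2, ?_⟩
    by_contra hc
    exact hlNot.1 ⟨hlL, hc⟩
  choose pick hpickL hpickNot hpickMem using key
  let f : ℕ → {A : Finset ℕ // A ∈ D} := fun n =>
    Nat.rec ⟨A0, hA0⟩ (fun _ p => ⟨insert (pick p.1 p.2) p.1, hpickMem p.1 p.2⟩) n
  have hfsucc : ∀ n, (f (n + 1)).1 = insert (pick (f n).1 (f n).2) (f n).1 :=
    fun _ => rfl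
  have hfsub : ∀ n, (f n).1 ⊆ (f (n + 1)).1 := by
    intro n
    rw [hfsucc]
    exact Finset.subset_insert _ _
  have hfmono : Monotone fun n => (f n).1 := monotone_nat_of_le_succ hfsub
  have hfcard : ∀ n, n ≤ (f n).1.card := by
    intro n
    induction n with
    | zero => exact Nat.zero_le _
    | succ n ih =>
      rw [hfsucc, Finset.card_insert_of_notMem (hpickNot (f n).1 (f n).2)]
      omega
  have hfne : ∀ n, ((f (n + 1)).1).Nonempty := by
    intro n
    rw [← Finset.card_pos]
    have := hfcard (n + 1)
    omega
  set m : ℕ → ℕ := fun n => (f (n + 1)).1.min' (hfne n) with hmdef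
  have hmanti : ∀ n, m (n + 1) ≤ m n := by
    intro n
    exact Finset.min'_subset (hfne n) (hfsub (n + 1))
  have hmmono : ∀ a b : ℕ, a ≤ b → m b ≤ m a := fun a b h =>
    antitone_nat_of_succ_le hmanti h
  obtain ⟨N, hN⟩ : ∃ N, m N = sInf (Set.range m) :=
    Nat.sInf_mem (Set.range_nonempty m)
  set v := sInf (Set.range m) with hvdef
  have hconst : ∀ k, m (N + k) = v := by
    intro k
    refine le_antisymm ?_ (Nat.sInf_le ⟨N + k, rfl⟩)
    calc m (N + k) ≤ m N := hmmono N (N + k) (Nat.le_add_right _ _)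
    _ = v := hN
  have hD0 : D ⊆ restrict G L := by
    rw [hD, ← sDeriv_zero G L]
    exact sDeriv_anti G L (zero_le (a := β))
  set g : ℕ → Finset ℕ := fun k => ((f (N + k + 1 + 1)).1).erase v with hgdef
  have hvmin : ∀ k, (f (N + k + 1 + 1)).1.min' (hfne (N + k + 1)) = v := by
    intro k
    have := hconst (k + 1)
    simpa [hmdef, show N + (k + 1) = N + k + 1 from rfl] using this
  have hgmem : ∀ k, g k ∈ 𝓕 := by
    intro k
    have hBG : (f (N + k + 1 + 1)).1 ∈ G := (hD0 (f (N + k + 1 + 1)).2).1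
    have hvB : v ∈ (f (N + k + 1 + 1)).1 := by
      rw [← hvmin k]; exact Finset.min'_mem _ _
    refine hGer _ hBG v hvB ?_
    intro mm hmm
    rw [← hvmin k]
    exact Finset.min'_le _ _ hmm
  have hgsub : ∀ k, g k ⊆ g (k + 1) := by
    intro k
    exact Finset.erase_subset_erase v (hfsub (N + k + 1 + 1))
  have hgcard : ∀ k, k ≤ (g k).card := by
    intro k
    have h1 := hfcard (N + k + 1 + 1)
    have hvB : v ∈ (f (N + k + 1 + 1)).1 := by
      rw [← hvmin k]; exact Finset.min'_mem _ _
    have h2 : (g k).card = (f (N + k + 1 + 1)).1.card - 1 :=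
      Finset.card_erase_of_mem hvB
    omega
  exact no_chain 𝓕 hcl g hgmem hgsub hgcard

lemma sDeriv_eventually_empty (𝓕 : Set (Finset ℕ)) (hcl : PtwiseClosed 𝓕)
    {G : Set (Finset ℕ)} (L : Set ℕ) (hL : L.Infinite)
    (hGer : ∀ B ∈ G, ∀ b ∈ B, (∀ m ∈ B, b ≤ m) → B.erase b ∈ 𝓕) :
    ∃ γ : Ordinal, sDeriv G L γ = ∅ := by
  by_contra hT
  push_neg at hT
  have hne' : ∀ {a b : Ordinal}, a < b → sDeriv G L b ≠ sDeriv G L a := by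
    intro a b hab heq
    have h1 : sDeriv G L b ⊆ sDeriv G L (a + 1) := by
      refine sDeriv_anti G L ?_
      rw [Ordinal.add_one_eq_succ]
      exact Order.succ_le_of_lt hab
    have hfix : sDeriv G L (a + 1) = sDeriv G L a := by
      apply Set.Subset.antisymm
      · intro x hx
        rw [sDeriv_add_one] at hx
        exact hx.1
      · rw [← heq]
        exact h1
    exact (hT a).ne_empty (deriv_fixed_empty 𝓕 hcl L hL hGer hfix)
  have hinj : Function.Injective (sDeriv G L) := by
    intro a b hab
    rcases lt_trichotomy a b with h | h | h
    · exact absurd hab.symm (hne' h)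
    · exact h
    · exact absurd hab (hne' h)
  exact not_injective_of_ordinal _ hinj

theorem stmt15 (𝓕 : Set (Finset ℕ)) (h𝓕 : Adequate 𝓕)
    (L : Set ℕ) (hL : L.Infinite) (α : Ordinal) :
    (∀ β : Ordinal, ∀ A ∈ sDeriv 𝓕 L β, A.Nonempty → ∀ l ∈ L, (∀ m ∈ A, l < m) →
      insert l A ∈
        sDeriv ({F | ∃ E ∈ 𝓕, ∃ n : ℕ, (∀ m ∈ E, n < m) ∧ F = insert n E} ∪ 𝓕) L β) ∧
    (sDeriv 𝓕 L (Ordinal.omega0 ^ α) ≠ ∅ →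
      Ordinal.omega0 ^ α + 1 <
        sIndex ({F | ∃ E ∈ 𝓕, ∃ n : ℕ, (∀ m ∈ E, n < m) ∧ F = insert n E} ∪ 𝓕) L) := by
  obtain ⟨hher, hcl⟩ := h𝓕
  set G : Set (Finset ℕ) :=
    {F | ∃ E ∈ 𝓕, ∃ n : ℕ, (∀ m ∈ E, n < m) ∧ F = insert n E} ∪ 𝓕 with hGdef
  have hins : ∀ A ∈ 𝓕, ∀ l : ℕ, (∀ m ∈ A, l < m) → insert l A ∈ G := by
    intro A hA l hlt
    exact Or.inl ⟨A, hA, l, hlt, rfl⟩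
  have hQ := insert_mem_sDeriv G L 𝓕 hins
  have hGher : Hereditary G := by
    rintro B B' hBB' (⟨E, hE, n, hlt, rfl⟩ | hB'𝓕)
    · by_cases hn : n ∈ B
      · left
        refine ⟨B.erase n, ?_, n, ?_, (Finset.insert_erase hn).symm⟩
        · refine hher ?_ hE
          intro r hr
          rcases Finset.mem_insert.mp (hBB' (Finset.mem_of_mem_erase hr)) with rfl | h
          · exact absurd rfl (Finset.ne_of_mem_erase hr)
          · exact h
        · intro mm hmm
          rcases Finset.mem_insert.mp (hBB' (Finset.mem_of_mem_erase hmm)) with rfl | h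
          · exact absurd rfl (Finset.ne_of_mem_erase hmm)
          · exact hlt mm h
      · right
        refine hher ?_ hE
        intro r hr
        rcases Finset.mem_insert.mp (hBB' hr) with rfl | h
        · exact absurd hr hn
        · exact h
    · exact Or.inr (hher hBB' hB'𝓕)
  have hGer : ∀ B ∈ G, ∀ b ∈ B, (∀ m ∈ B, b ≤ m) → B.erase b ∈ 𝓕 := by
    rintro B (⟨E, hE, n, hlt, rfl⟩ | hB𝓕) b hb hble
    · have hbn : b = n := by
        rcases Finset.mem_insert.mp hb with rfl | h
        · rfl
        · exact absurd (hble n (Finset.mem_insert_self n E)) (not_le.mpr (hlt b h))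
      subst hbn
      have hnE : b ∉ E := fun h => lt_irrefl b (hlt b h)
      rw [Finset.erase_insert hnE]
      exact hE
    · exact hher (Finset.erase_subset _ _) hB𝓕
  constructor
  · intro β A hA _ l hl hlt
    exact hQ β A hA l hl hlt
  · intro hne
    obtain ⟨A, hA⟩ := Set.nonempty_iff_ne_empty.mpr hne
    have hemp : (∅ : Finset ℕ) ∈ sDeriv 𝓕 L (Ordinal.omega0 ^ α) :=
      sDeriv_hered 𝓕 L hher _ (Finset.empty_subset A) hA
    have hsingle : ∀ l ∈ L, ({l} : Finset ℕ) ∈ sDeriv G L (Ordinal.omega0 ^ α) := by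
      intro l hl
      simpa using insert_mem_sDeriv G L 𝓕 hins _ ∅ hemp l hl (by simp)
    obtain ⟨l0, hl0⟩ := hL.nonempty
    have hempG : (∅ : Finset ℕ) ∈ sDeriv G L (Ordinal.omega0 ^ α) :=
      sDeriv_hered G L hGher _ (Finset.empty_subset {l0}) (hsingle l0 hl0)
    have hsucc : (∅ : Finset ℕ) ∈ sDeriv G L (Ordinal.omega0 ^ α + 1) := by
      rw [sDeriv_add_one]
      refine ⟨hempG, Set.finite_empty.subset ?_⟩
      rintro k ⟨hk1, hk2⟩
      exact hk2 (by simpa using hsingle k hk1)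
    by_contra hle
    push_neg at hle
    have hsub2 : sDeriv G L (Ordinal.omega0 ^ α + 1) ⊆ sDeriv G L (sIndex G L) :=
      sDeriv_anti G L hle
    have hfin := hsub2 hsucc
    have hmem : sDeriv G L (sIndex G L) = ∅ :=
      csInf_mem (sDeriv_eventually_empty 𝓕 hcl L hL hGer)
    rw [hmem] at hfin
    exact hfin
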